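/- Let A be a C*-algebra with an approximate unit consisting of projections, and suppose that for every projection p ∈ A there is a projection q ∈ A such that the n-fold direct sum p ⊗ 1ₙ is Cuntz subequivalent to q for all n ≥ 1. Then every densely defined lower semi-continuous trace on A is zero. -/

import Mathlib

open scoped ENNReal

/-! Auxiliary lemmas -/

section Aux

noncomputable def stmt11kk (ε : ℝ) : ℝ → ℝ := fun t => Real.sqrt (max (t - ε) 0 / max t ε)

lemma stmt11kk_cont {ε : ℝ} (hε : 0 < ε) : Continuous (stmt11kk ε) := by
  have : Continuous (fun t : ℝ => max (t - ε) 0 / max t ε) :=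
    Continuous.div (by fun_prop) (by fun_prop)
      (fun t => ne_of_gt (lt_of_lt_of_le hε (le_max_right t ε)))
  exact this.sqrt

lemma stmt11kk_zero {ε : ℝ} (hε : 0 < ε) : stmt11kk ε 0 = 0 := by
  have : max (0 - ε) 0 = 0 := max_eq_right (by linarith)
  simp [stmt11kk, this]
  exact Or.inl hε.le

lemma stmt11kk_mul {ε : ℝ} (hε : 0 < ε) (t : ℝ) :
    stmt11kk ε t * t * stmt11kk ε t = max (t - ε) 0 := by
  have hD : 0 < max t ε := lt_of_lt_of_le hε (le_max_right t ε)
  have hN : (0:ℝ) ≤ max (t - ε) 0 := le_max_right _ _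
  have h1 : stmt11kk ε t * stmt11kk ε t = max (t - ε) 0 / max t ε :=
    Real.mul_self_sqrt (div_nonneg hN hD.le)
  have h2 : stmt11kk ε t * t * stmt11kk ε t = (stmt11kk ε t * stmt11kk ε t) * t := by ring
  rw [h2, h1]
  rcases le_or_gt t ε with h | h
  · rw [max_eq_right (sub_nonpos.mpr h)]; simp
  · rw [max_eq_left (by linarith : (0:ℝ) ≤ t - ε), max_eq_left h.le]
    exact div_mul_cancel₀ _ (by linarith : t ≠ 0)

lemma stmt11kk_sq_le {ε : ℝ} (hε : 0 < ε) (t : ℝ) :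
    ε * (stmt11kk ε t * stmt11kk ε t) ≤ max (t - ε) 0 := by
  have hD : 0 < max t ε := lt_of_lt_of_le hε (le_max_right t ε)
  have hN : (0:ℝ) ≤ max (t - ε) 0 := le_max_right _ _
  have h1 : stmt11kk ε t * stmt11kk ε t = max (t - ε) 0 / max t ε :=
    Real.mul_self_sqrt (div_nonneg hN hD.le)
  rw [h1]
  calc ε * (max (t - ε) 0 / max t ε) = max (t - ε) 0 * (ε / max t ε) := by ring
    _ ≤ max (t - ε) 0 * 1 :=
        mul_le_mul_of_nonneg_left ((div_le_one hD).mpr (le_max_right t ε)) hN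
    _ = max (t - ε) 0 := mul_one _

lemma stmt11kk_le_one {ε : ℝ} (hε : 0 < ε) (t : ℝ) : ‖stmt11kk ε t‖ ≤ 1 := by
  have hD : 0 < max t ε := lt_of_lt_of_le hε (le_max_right t ε)
  have harg : max (t - ε) 0 / max t ε ≤ 1 := by
    rw [div_le_one hD]
    rcases le_or_gt t ε with h | h
    · rw [max_eq_right (sub_nonpos.mpr h)]; exact hε.le.trans (le_max_right t ε)
    · rw [max_eq_left (by linarith : (0:ℝ) ≤ t - ε)]
      calc t - ε ≤ t := by linarith
        _ ≤ max t ε := le_max_left t ε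
  rw [show stmt11kk ε t = Real.sqrt (max (t - ε) 0 / max t ε) from rfl, Real.norm_eq_abs,
    abs_of_nonneg (Real.sqrt_nonneg _)]
  calc Real.sqrt (max (t - ε) 0 / max t ε) ≤ Real.sqrt 1 := Real.sqrt_le_sqrt harg
    _ = 1 := Real.sqrt_one

variable {A : Type*} [NonUnitalCStarAlgebra A] [PartialOrder A] [StarOrderedRing A]

lemma stmt11_smul_nonneg (r : ℝ) (hr : 0 ≤ r) (x : A) (hx : 0 ≤ x) : 0 ≤ r • x := by
  have hsa : IsSelfAdjoint x := hx.isSelfAdjoint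
  have h1 : cfcₙ (fun t : ℝ => r • t) x = r • x := cfcₙ_smul_id r x
  rw [← h1]
  exact cfcₙ_nonneg fun t ht => smul_nonneg hr (quasispectrum_nonneg_of_nonneg x hx t ht)

lemma stmt11_smul_mono_scalar {r r' : ℝ} (h : r ≤ r') {x : A} (hx : 0 ≤ x) :
    r • x ≤ r' • x := by
  have := stmt11_smul_nonneg (r' - r) (by linarith) x hx
  rw [sub_smul] at this
  exact sub_nonneg.mp this

lemma stmt11_smul_mono_right {r : ℝ} (hr : 0 ≤ r) {x y : A} (h : x ≤ y) :
    r • x ≤ r • y := by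
  have := stmt11_smul_nonneg r hr (y - x) (sub_nonneg.mpr h)
  rw [smul_sub] at this
  exact sub_nonneg.mp this

lemma stmt11_proj_norm_le_one {q : A} (hq : q * q = q) (hsa : star q = q) : ‖q‖ ≤ 1 := by
  have h1 : ‖q‖ * ‖q‖ = ‖q‖ := by
    conv_rhs => rw [← hq]
    rw [← CStarRing.norm_star_mul_self (x := q), hsa]
  nlinarith [norm_nonneg q]

lemma stmt11_yay (a : A) (ε : ℝ) (hε : 0 < ε) (ha : 0 ≤ a) :
    cfcₙ (stmt11kk ε) a * a * cfcₙ (stmt11kk ε) a = cfcₙ (fun t : ℝ => max (t - ε) 0) a := by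
  have hsa : IsSelfAdjoint a := ha.isSelfAdjoint
  have hc := (stmt11kk_cont hε).continuousOn (s := quasispectrum ℝ a)
  have h0 := stmt11kk_zero hε
  have hkt : Continuous (fun t : ℝ => stmt11kk ε t * t) := (stmt11kk_cont hε).mul continuous_id
  have h1 : cfcₙ (fun t : ℝ => stmt11kk ε t * t) a = cfcₙ (stmt11kk ε) a * a := by
    rw [cfcₙ_mul (stmt11kk ε) (fun t : ℝ => t) a hc h0 continuous_id.continuousOn rfl,
      cfcₙ_id' ℝ a]
  have h2 : cfcₙ (fun t : ℝ => stmt11kk ε t * t * stmt11kk ε t) a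
      = cfcₙ (fun t : ℝ => stmt11kk ε t * t) a * cfcₙ (stmt11kk ε) a :=
    cfcₙ_mul _ _ a hkt.continuousOn (by simp [h0]) hc h0
  rw [← h1, ← h2]
  exact cfcₙ_congr (fun t _ => stmt11kk_mul hε t)

lemma stmt11_eyy (a : A) (ε : ℝ) (hε : 0 < ε) (ha : 0 ≤ a) :
    ε • (cfcₙ (stmt11kk ε) a * cfcₙ (stmt11kk ε) a) ≤ cfcₙ (fun t : ℝ => max (t - ε) 0) a := by
  have hsa : IsSelfAdjoint a := ha.isSelfAdjoint
  have hc := (stmt11kk_cont hε).continuousOn (s := quasispectrum ℝ a)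
  have h0 := stmt11kk_zero hε
  have h1 : cfcₙ (fun t : ℝ => stmt11kk ε t * stmt11kk ε t) a
      = cfcₙ (stmt11kk ε) a * cfcₙ (stmt11kk ε) a :=
    cfcₙ_mul _ _ a hc h0 hc h0
  have h2 : cfcₙ (fun t : ℝ => ε • (stmt11kk ε t * stmt11kk ε t)) a
      = ε • cfcₙ (fun t : ℝ => stmt11kk ε t * stmt11kk ε t) a :=
    cfcₙ_smul ε _ a ((stmt11kk_cont hε).mul (stmt11kk_cont hε)).continuousOn (by simp [h0])
  rw [← h1, ← h2]
  exact cfcₙ_mono (fun t _ => by simpa using stmt11kk_sq_le hε t)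
    (by exact ((continuous_const (y := ε)).smul ((stmt11kk_cont hε).mul (stmt11kk_cont hε))).continuousOn)
    (by fun_prop) (by simp [h0]) (by simp [hε.le])

lemma stmt11_norm_y_le (a : A) (ε : ℝ) (hε : 0 < ε) : ‖cfcₙ (stmt11kk ε) a‖ ≤ 1 :=
  norm_cfcₙ_le (fun t _ => stmt11kk_le_one hε t)

end Aux

/-- Let `A` be a C*-algebra with an approximate unit of projections such that
every projection `p` admits a projection `q` with `p ⊗ 1ₙ ≾ q` for all `n`. Then every
densely defined lower semi-continuous trace on `A` is zero. -/
theorem stmt11 {A : Type u} [NonUnitalCStarAlgebra A] [PartialOrder A] [StarOrderedRing A]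
    (hau : ∃ (Λ : Type u) (_ : Nonempty Λ) (le : Λ → Λ → Prop),
      (∀ i j : Λ, ∃ k : Λ, le i k ∧ le j k) ∧
      ∃ p : Λ → A, (∀ i, IsIdempotentElem (p i) ∧ IsSelfAdjoint (p i)) ∧
        ∀ (a : A) (ε : ℝ), 0 < ε → ∃ i : Λ, ∀ j : Λ, le i j → ‖p j * a - a‖ < ε)
    (hsub : ∀ p : A, IsIdempotentElem p → IsSelfAdjoint p →
      ∃ q : A, IsIdempotentElem q ∧ IsSelfAdjoint q ∧
        ∀ n : ℕ, ∃ v : Matrix (Fin (n + 1)) (Fin (n + 1)) A,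
          star v * v = Matrix.diagonal (fun _ => p) ∧
          (v * star v) * Matrix.single 0 0 q = v * star v) :
    ∀ τ : A → ℝ≥0∞,
      (∀ a b : A, 0 ≤ a → 0 ≤ b → τ (a + b) = τ a + τ b) →
      (τ 0 = 0) →
      (∀ a : A, 0 ≤ a → ∀ r : ℝ, 0 < r → τ ((r : ℂ) • a) = ENNReal.ofReal r * τ a) →
      (∀ x : A, τ (star x * x) = τ (x * star x)) →
      (∀ a : A, 0 ≤ a →
        τ a = ⨆ ε : {ε : ℝ // 0 < ε}, τ (cfcₙ (fun t : ℝ => max (t - (ε : ℝ)) 0) a)) →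
      Dense ((Submodule.span ℂ {a : A | 0 ≤ a ∧ τ a ≠ ⊤} : Submodule ℂ A) : Set A) →
      ∀ a : A, 0 ≤ a → τ a = 0 := by
  obtain ⟨Λ, hΛne, lle, hdir, pr, hproj, happrox⟩ := hau
  intro τ hadd hzero hsmul htrace hsup hdense
  -- monotonicity
  have hmono : ∀ x y : A, 0 ≤ x → x ≤ y → τ x ≤ τ y := by
    intro x y hx hxy
    have h := hadd x (y - x) hx (sub_nonneg.mpr hxy)
    rw [show x + (y - x) = y by abel] at h
    rw [h]; exact le_self_add
  -- real scaling
  have hsmulR : ∀ (x : A), 0 ≤ x → ∀ r : ℝ, 0 ≤ r → τ (r • x) = ENNReal.ofReal r * τ x := by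
    intro x hx r hr
    rcases hr.lt_or_eq with h | h
    · rw [← Complex.coe_smul]; exact hsmul x hx r h
    · rw [← h]; simp [hzero]
  -- finite sums
  have hsum : ∀ (n : ℕ) (f : Fin n → A), (∀ i, 0 ≤ f i) →
      τ (∑ i, f i) = ∑ i, τ (f i) := by
    intro n f hf
    induction n with
    | zero => simpa using hzero
    | succ m ih =>
      rw [Fin.sum_univ_succ, Fin.sum_univ_succ,
        hadd _ _ (hf 0) (Finset.sum_nonneg fun i _ => hf _), ih _ (fun i => hf _)]
  -- τ is finite on projections
  have hτfin : ∀ q : A, IsIdempotentElem q → IsSelfAdjoint q → τ q ≠ ⊤ := by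
    intro q hq_idem hq_sa
    have hq_sa' := hq_sa.star_eq
    have hq_nonneg : 0 ≤ q := by
      have h : star q * q = q := by rw [hq_sa', hq_idem.eq]
      exact h ▸ star_mul_self_nonneg q
    have hspanP : ∀ y ∈ Submodule.span ℂ {x : A | 0 ≤ x ∧ τ x ≠ ⊤},
        ∃ d : A, 0 ≤ d ∧ τ d ≠ ⊤ ∧ ∀ c : ℂ, c • y + star (c • y) ≤ ‖c‖ • d := by
      intro y hy
      induction hy using Submodule.span_induction with
      | mem x hx =>
        obtain ⟨hx0, hxfin⟩ := hx
        refine ⟨x + x, add_nonneg hx0 hx0, ?_, ?_⟩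
        · rw [hadd x x hx0 hx0]; exact ENNReal.add_ne_top.mpr ⟨hxfin, hxfin⟩
        · intro c
          have hxsa : star x = x := hx0.isSelfAdjoint.star_eq
          have h1 : c • x + star (c • x) = (2 * c.re : ℝ) • x := by
            rw [star_smul, hxsa, ← add_smul,
              show c + star c = ((2 * c.re : ℝ) : ℂ) by
                rw [Complex.star_def, Complex.add_conj],
              Complex.coe_smul]
          rw [h1, smul_add]
          have hre : (2 * c.re : ℝ) ≤ 2 * ‖c‖ := by
            have := Complex.abs_re_le_norm c
            have h3 : c.re ≤ ‖c‖ := by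
              exact le_trans (le_abs_self _) this
            linarith
          calc (2 * c.re : ℝ) • x ≤ (2 * ‖c‖ : ℝ) • x := stmt11_smul_mono_scalar hre hx0
            _ = ‖c‖ • x + ‖c‖ • x := by rw [two_mul, add_smul]
      | zero =>
        exact ⟨0, le_refl 0, by rw [hzero]; exact ENNReal.zero_ne_top, by intro c; simp⟩
      | add x z hxm hzm ihx ihz =>
        obtain ⟨d1, hd1, hfin1, hle1⟩ := ihx
        obtain ⟨d2, hd2, hfin2, hle2⟩ := ihz
        refine ⟨d1 + d2, add_nonneg hd1 hd2,
          by rw [hadd _ _ hd1 hd2]; exact ENNReal.add_ne_top.mpr ⟨hfin1, hfin2⟩, ?_⟩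
        intro c
        have hsum2 := add_le_add (hle1 c) (hle2 c)
        calc c • (x + z) + star (c • (x + z))
            = (c • x + star (c • x)) + (c • z + star (c • z)) := by
              rw [smul_add, star_add]; abel
          _ ≤ ‖c‖ • d1 + ‖c‖ • d2 := hsum2
          _ = ‖c‖ • (d1 + d2) := (smul_add _ _ _).symm
      | smul c₀ x hxm ihx =>
        obtain ⟨d, hd, hfin, hle⟩ := ihx
        refine ⟨‖c₀‖ • d, stmt11_smul_nonneg _ (norm_nonneg c₀) d hd, ?_, ?_⟩
        · rw [hsmulR d hd ‖c₀‖ (norm_nonneg c₀)]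
          exact ENNReal.mul_ne_top ENNReal.ofReal_ne_top hfin
        · intro c
          have h := hle (c * c₀)
          rw [smul_smul]
          calc (c * c₀) • x + star ((c * c₀) • x) ≤ ‖c * c₀‖ • d := h
            _ = ‖c‖ • (‖c₀‖ • d) := by rw [norm_mul, mul_smul]
    obtain ⟨y, hy_ball, hy_mem⟩ := Metric.dense_iff.mp hdense q 4⁻¹ (by norm_num)
    rw [Metric.mem_ball, dist_eq_norm] at hy_ball
    obtain ⟨d, hd_nonneg, hd_fin, hle⟩ := hspanP y hy_mem
    have hzd : y + star y ≤ d := by simpa using hle 1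
    set z := y + star y with hzdef
    have hz_sa : IsSelfAdjoint z := by
      rw [hzdef, IsSelfAdjoint, star_add, star_star, add_comm]
    have hznorm : ‖q + q - z‖ ≤ 2⁻¹ := by
      have h1 : q + q - z = (q - y) + star (q - y) := by
        rw [hzdef, star_sub, hq_sa']; abel
      rw [h1]
      have h2 : ‖q - y‖ = ‖y - q‖ := norm_sub_rev q y
      calc ‖(q - y) + star (q - y)‖ ≤ ‖q - y‖ + ‖star (q - y)‖ := norm_add_le _ _
        _ = ‖q - y‖ + ‖q - y‖ := by rw [norm_star]
        _ ≤ 4⁻¹ + 4⁻¹ := by rw [h2]; exact add_le_add hy_ball.le hy_ball.le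
        _ = 2⁻¹ := by norm_num
    have hconj : q * (q + q - z) * q ≤ ‖q + q - z‖ • q := by
      have h := CStarAlgebra.star_left_conjugate_le_norm_smul (a := q) (b := q + q - z)
        ((hq_sa.add hq_sa).sub hz_sa)
      rwa [hq_sa', hq_idem.eq] at h
    have hq3 : q * (q + q) * q = q + q := by
      simp only [mul_add, add_mul, hq_idem.eq]
    have hexp : q * (q + q - z) * q = (q + q) - q * z * q := by
      rw [mul_sub, sub_mul, hq3]
    have h2 : (q + q) - q * z * q ≤ (2⁻¹ : ℝ) • q :=
      le_trans (hexp ▸ hconj) (stmt11_smul_mono_scalar hznorm hq_nonneg)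
    have hqz : q ≤ q * z * q := by
      have h3 : (0:A) ≤ (2⁻¹ : ℝ) • q := stmt11_smul_nonneg _ (by norm_num) q hq_nonneg
      have h4 : q * z * q - q = ((2⁻¹:ℝ) • q - ((q + q) - q * z * q)) + (2⁻¹:ℝ) • q := by
        module
      have h5 := add_nonneg (sub_nonneg.mpr h2) h3
      exact sub_nonneg.mp (h4 ▸ h5)
    have hqdq : q ≤ q * d * q := by
      refine le_trans hqz ?_
      have h := star_left_conjugate_le_conjugate hzd q
      rwa [hq_sa'] at h
    have hτqd : τ q ≤ τ (q * d * q) := hmono _ _ hq_nonneg hqdq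
    set u := CFC.sqrt d with hu_def
    have hu : u * u = d := CFC.sqrt_mul_sqrt_self d hd_nonneg
    have hu_sa : star u = u := (CFC.sqrt_nonneg (a := d)).isSelfAdjoint.star_eq
    have hqdq_eq : q * d * q = star (u * q) * (u * q) := by
      rw [star_mul, hu_sa, hq_sa', ← hu]; noncomm_ring
    have huqu : (u * q) * star (u * q) = u * q * u := by
      rw [star_mul, hu_sa, hq_sa']
      calc (u * q) * (q * u) = u * (q * q) * u := by noncomm_ring
        _ = u * q * u := by rw [hq_idem.eq]
    have hle2 : u * q * u ≤ d := by
      have h := CStarAlgebra.star_left_conjugate_le_norm_smul (a := u) (b := q) hq_sa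
      rw [hu_sa, hu] at h
      calc u * q * u ≤ ‖q‖ • d := h
        _ ≤ (1:ℝ) • d := stmt11_smul_mono_scalar
              (stmt11_proj_norm_le_one hq_idem.eq hq_sa') hd_nonneg
        _ = d := one_smul ℝ d
    have hfinal : τ q ≤ τ d := by
      calc τ q ≤ τ (q * d * q) := hτqd
        _ = τ ((u * q) * star (u * q)) := by rw [hqdq_eq, htrace]
        _ ≤ τ d := by
            rw [huqu]
            exact hmono _ _ (huqu ▸ mul_star_self_nonneg (u * q)) hle2
    exact ne_top_of_le_ne_top hd_fin hfinal
  -- τ vanishes on projections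
  have hproj0 : ∀ p : A, IsIdempotentElem p → IsSelfAdjoint p → τ p = 0 := by
    intro p hp_idem hp_sa
    obtain ⟨q, hq_idem, hq_sa, hv⟩ := hsub p hp_idem hp_sa
    have hqfin := hτfin q hq_idem hq_sa
    have key : ∀ n : ℕ, ((n + 1 : ℕ) : ℝ≥0∞) * τ p ≤ τ q := by
      intro n
      obtain ⟨v, hvv, hvq⟩ := hv n
      -- v * diagonal p = v
      have hvev : v * Matrix.diagonal (fun _ : Fin (n+1) => p) = v := by
        set e : Matrix (Fin (n+1)) (Fin (n+1)) A := Matrix.diagonal (fun _ => p) with he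
        have hee : e * e = e := by
          rw [he, Matrix.diagonal_mul_diagonal]
          simp [hp_idem.eq]
        have hse : star e = e := by
          rw [he, Matrix.star_eq_conjTranspose, Matrix.diagonal_conjTranspose]
          simp [hp_sa.star_eq, Function.comp]
        have hkey : star (v * e - v) * (v * e - v)
            = e * (star v * v) * e - e * (star v * v) - (star v * v) * e + star v * v := by
          rw [star_sub, star_mul, hse]; noncomm_ring
        rw [hvv] at hkey
        have h0 : star (v * e - v) * (v * e - v) = 0 := by
          rw [hkey]
          simp only [hee]
          abel
        have hentry : ∀ i j, (v * e - v) i j = 0 := by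
          intro i j
          have hd := congrFun (congrFun h0 j) j
          rw [Matrix.mul_apply] at hd
          simp only [Matrix.star_apply, Matrix.zero_apply] at hd
          have h1 : star ((v * e - v) i j) * ((v * e - v) i j) = 0 := by
            refine le_antisymm ?_ (star_mul_self_nonneg _)
            calc star ((v * e - v) i j) * ((v * e - v) i j)
                ≤ ∑ k, star ((v * e - v) k j) * ((v * e - v) k j) :=
                  Finset.single_le_sum
                    (f := fun k => star ((v * e - v) k j) * ((v * e - v) k j))
                    (fun k _ => star_mul_self_nonneg _) (Finset.mem_univ i)
              _ = 0 := hd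
          exact (CStarRing.star_mul_self_eq_zero_iff _).mp h1
        have hz : v * e - v = 0 := Matrix.ext fun i j => by rw [hentry i j]; rfl
        exact sub_eq_zero.mp hz
      set w := v * star v with hw
      have hws : star w = w := by rw [hw, star_mul, star_star]
      have hww : w * w = w := by
        rw [hw]
        calc (v * star v) * (v * star v) = v * (star v * v) * star v := by noncomm_ring
          _ = v * Matrix.diagonal (fun _ => p) * star v := by rw [hvv]
          _ = v * star v := by rw [hvev]
      have hcol : ∀ j, ∑ i, star (v i j) * v i j = p := by
        intro j
        have h := congrFun (congrFun hvv j) j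
        simpa [Matrix.mul_apply, Matrix.star_apply] using h
      have hwcol : ∀ i j, j ≠ 0 → w i j = 0 := by
        intro i j hj
        have h := congrFun (congrFun hvq i) j
        rw [Matrix.mul_apply] at h
        simp [Matrix.single, Ne.symm hj] at h
        exact h.symm
      have hrq : w 0 0 * q = w 0 0 := by
        have h := congrFun (congrFun hvq 0) 0
        rw [Matrix.mul_apply] at h
        simpa [Matrix.single] using h
      have hr_idem : w 0 0 * w 0 0 = w 0 0 := by
        have h := congrFun (congrFun hww 0) 0
        rw [Matrix.mul_apply] at h
        rw [Finset.sum_eq_single 0 (fun k _ hk => by rw [hwcol 0 k hk, zero_mul])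
          (fun hk => absurd (Finset.mem_univ _) hk)] at h
        exact h
      have hr_sa : star (w 0 0) = w 0 0 := by
        have h := congrFun (congrFun hws 0) 0
        simpa [Matrix.star_apply] using h
      set r := w 0 0 with hr_def
      have hr_nonneg : 0 ≤ r := by
        have h : star r * r = r := by rw [hr_sa, hr_idem]
        exact h ▸ star_mul_self_nonneg r
      have hqr : q * r = r := by
        have h : star (r * q) = star r := by rw [hrq]
        rw [star_mul, hq_sa.star_eq, hr_sa] at h
        exact h
      have hqmr : q - r = star (q - r) * (q - r) := by
        rw [star_sub, hq_sa.star_eq, hr_sa, mul_sub, sub_mul, sub_mul,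
          hq_idem.eq, hr_idem, hqr, hrq]
        abel
      have hqmr_nonneg : 0 ≤ q - r := hqmr ▸ star_mul_self_nonneg (q - r)
      have hrq_le : τ r ≤ τ q := by
        have h := hadd r (q - r) hr_nonneg hqmr_nonneg
        rw [show r + (q - r) = q by abel] at h
        rw [h]; exact le_self_add
      -- trace computation
      have hτp_sum : ∀ j : Fin (n+1), τ p = ∑ i, τ (star (v i j) * v i j) := by
        intro j
        rw [← hcol j, hsum _ _ (fun i => star_mul_self_nonneg _)]
      have hwdiag : ∀ i : Fin (n+1), τ (w i i) = ∑ j, τ (v i j * star (v i j)) := by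
        intro i
        have h : w i i = ∑ j, v i j * star (v i j) := by
          rw [hw]; simp [Matrix.mul_apply, Matrix.star_apply]
        rw [h, hsum _ _ (fun j => mul_star_self_nonneg _)]
      calc ((n + 1 : ℕ) : ℝ≥0∞) * τ p = ∑ _j : Fin (n+1), τ p := by
            rw [Finset.sum_const, Finset.card_univ, Fintype.card_fin, nsmul_eq_mul]
        _ = ∑ j : Fin (n+1), ∑ i, τ (star (v i j) * v i j) :=
            Finset.sum_congr rfl fun j _ => hτp_sum j
        _ = ∑ i : Fin (n+1), ∑ j, τ (star (v i j) * v i j) := Finset.sum_comm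
        _ = ∑ i : Fin (n+1), ∑ j, τ (v i j * star (v i j)) :=
            Finset.sum_congr rfl fun i _ => Finset.sum_congr rfl fun j _ => htrace (v i j)
        _ = ∑ i : Fin (n+1), τ (w i i) :=
            Finset.sum_congr rfl fun i _ => (hwdiag i).symm
        _ = τ r := by
            rw [Finset.sum_eq_single 0 (fun i _ hi => by rw [hwcol i i hi, hzero])
              (fun hk => absurd (Finset.mem_univ _) hk)]
        _ ≤ τ q := hrq_le
    by_contra hne
    have hstep : ∀ n : ℕ, (n : ℝ≥0∞) * τ p ≤ τ q := by
      intro n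
      refine le_trans (mul_le_mul_left ?_ (τ p)) (key n)
      exact_mod_cast Nat.le_succ n
    have htop : (⊤ : ℝ≥0∞) * τ p ≤ τ q := by
      calc (⊤ : ℝ≥0∞) * τ p = (⨆ n : ℕ, (n : ℝ≥0∞)) * τ p := by rw [ENNReal.iSup_natCast]
        _ = ⨆ n : ℕ, (n : ℝ≥0∞) * τ p := by rw [ENNReal.iSup_mul]
        _ ≤ τ q := iSup_le hstep
    rw [ENNReal.top_mul hne] at htop
    exact hqfin (top_le_iff.mp htop)
  -- main argument
  intro a ha
  rw [hsup a ha]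
  rw [ENNReal.iSup_eq_zero]
  rintro ⟨ε, hε⟩
  show τ (cfcₙ (fun t : ℝ => max (t - ε) 0) a) = 0
  set b := CFC.sqrt a with hb_def
  have hb : b * b = a := CFC.sqrt_mul_sqrt_self a ha
  have hb_nonneg : (0:A) ≤ b := CFC.sqrt_nonneg a
  have hb_sa : star b = b := hb_nonneg.isSelfAdjoint.star_eq
  set δ := Real.sqrt (ε / 2) with hδ_def
  have hδ : 0 < δ := Real.sqrt_pos.mpr (by linarith)
  obtain ⟨i, hi⟩ := happrox b δ hδ
  obtain ⟨kΛ, hik, -⟩ := hdir i i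
  have hPb' : ‖pr kΛ * b - b‖ < δ := hi kΛ hik
  set P := pr kΛ with hP_def
  have hP_idem : P * P = P := (hproj kΛ).1.eq
  have hP_sa : star P = P := (hproj kΛ).2.star_eq
  set s := b - b * P with hs_def
  have hstar_s : star s = b - P * b := by
    rw [hs_def, star_sub, star_mul, hP_sa, hb_sa]
  have hs_norm : ‖s‖ < δ := by
    have h : ‖s‖ = ‖star s‖ := (norm_star s).symm
    rw [h, hstar_s, show b - P * b = -(P * b - b) by abel, norm_neg]
    exact hPb'
  have hssa : s * star s = a - b * P * b := by
    calc s * star s = b * b - b * P * b - b * P * b + b * P * P * b := by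
          rw [hstar_s, hs_def]; noncomm_ring
      _ = a - b * P * b := by rw [mul_assoc b P P, hP_idem, hb]; abel
  set c := b * P * b with hc_def
  have he_nonneg : 0 ≤ a - c := hssa ▸ mul_star_self_nonneg s
  have he_norm : ‖a - c‖ ≤ ε / 2 := by
    rw [← hssa, CStarRing.norm_self_mul_star]
    have h1 : ‖s‖ * ‖s‖ ≤ δ * δ := mul_le_mul hs_norm.le hs_norm.le (norm_nonneg s) hδ.le
    have h2 : δ * δ = ε / 2 := Real.mul_self_sqrt (by linarith)
    linarith
  have hc_nonneg : 0 ≤ c := by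
    have h : star (P * b) * (P * b) = b * (P * P) * b := by
      rw [star_mul, hP_sa, hb_sa]; noncomm_ring
    rw [hP_idem] at h
    have h2 : c = star (P * b) * (P * b) := by rw [h]
    exact h2 ▸ star_mul_self_nonneg (P * b)
  set y := cfcₙ (stmt11kk ε) a with hy_def
  set f := cfcₙ (fun t : ℝ => max (t - (ε:ℝ)) 0) a with hf_def
  have hy_sa : star y = y := (cfcₙ_predicate (stmt11kk ε) a : IsSelfAdjoint _).star_eq
  have hf_nonneg : 0 ≤ f := cfcₙ_nonneg (fun t _ => le_max_right _ _)
  have hyy_nonneg : 0 ≤ y * y := by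
    have h : y * y = star y * y := by rw [hy_sa]
    exact h ▸ star_mul_self_nonneg y
  have hyay : y * a * y = f := stmt11_yay a ε hε ha
  have heyy : ε • (y * y) ≤ f := stmt11_eyy a ε hε ha
  have h_yey : y * (a - c) * y ≤ (2⁻¹ : ℝ) • f := by
    calc y * (a - c) * y = star y * (a - c) * y := by rw [hy_sa]
      _ ≤ ‖a - c‖ • (star y * y) :=
          CStarAlgebra.star_left_conjugate_le_norm_smul he_nonneg.isSelfAdjoint
      _ = ‖a - c‖ • (y * y) := by rw [hy_sa]
      _ ≤ (ε / 2) • (y * y) := stmt11_smul_mono_scalar he_norm hyy_nonneg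
      _ = (2⁻¹ : ℝ) • (ε • (y * y)) := by rw [smul_smul]; congr 1; ring
      _ ≤ (2⁻¹ : ℝ) • f := stmt11_smul_mono_right (by norm_num) heyy
  have hfc : (2⁻¹ : ℝ) • f ≤ y * c * y := by
    have hexp : y * c * y = y * a * y - y * (a - c) * y := by noncomm_ring
    rw [hexp, hyay]
    calc (2⁻¹:ℝ) • f = f - (2⁻¹:ℝ) • f := by module
      _ ≤ f - y * (a - c) * y := sub_le_sub_left h_yey f
  have h2f_nonneg : (0:A) ≤ (2⁻¹:ℝ) • f := stmt11_smul_nonneg _ (by norm_num) f hf_nonneg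
  have hycy_eq : y * c * y = star (P * b * y) * (P * b * y) := by
    have h1 : star (P * b * y) * (P * b * y) = y * b * (P * P) * (b * y) := by
      rw [star_mul, star_mul, hP_sa, hb_sa, hy_sa]; noncomm_ring
    rw [h1, hP_idem, hc_def]; noncomm_ring
  set x := P * b * y with hx_def
  have hτ1 : τ ((2⁻¹:ℝ) • f) ≤ τ (y * c * y) := hmono _ _ h2f_nonneg hfc
  have hτ2 : τ (y * c * y) = τ (x * star x) := by rw [hycy_eq, htrace]
  have hxsx : x * star x = P * b * (y * y) * (b * P) := by
    rw [hx_def, star_mul, star_mul, hP_sa, hb_sa, hy_sa]; noncomm_ring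
  have hPaP_eq : P * a * P = star (b * P) * (b * P) := by
    rw [star_mul, hP_sa, hb_sa, ← hb]; noncomm_ring
  have hPaP_nonneg : 0 ≤ P * a * P := hPaP_eq ▸ star_mul_self_nonneg (b * P)
  have hconj2 : P * b * (y * y) * (b * P) ≤ ‖y * y‖ • (P * a * P) := by
    have h := CStarAlgebra.star_left_conjugate_le_norm_smul (a := b * P) (b := y * y)
      hyy_nonneg.isSelfAdjoint
    rw [star_mul, hP_sa, hb_sa] at h
    have h2 : (P * b) * (b * P) = P * a * P := by rw [← hb]; noncomm_ring
    rw [h2] at h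
    calc P * b * (y * y) * (b * P) = (P * b) * (y * y) * (b * P) := by noncomm_ring
      _ ≤ ‖y * y‖ • (P * a * P) := h
  have hy2_norm : ‖y * y‖ ≤ 1 := by
    calc ‖y * y‖ ≤ ‖y‖ * ‖y‖ := norm_mul_le y y
      _ ≤ 1 * 1 := mul_le_mul (stmt11_norm_y_le a ε hε) (stmt11_norm_y_le a ε hε)
          (norm_nonneg y) zero_le_one
      _ = 1 := one_mul 1
  have hxsx_le : x * star x ≤ P * a * P := by
    rw [hxsx]
    calc P * b * (y * y) * (b * P) ≤ ‖y * y‖ • (P * a * P) := hconj2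
      _ ≤ (1:ℝ) • (P * a * P) := stmt11_smul_mono_scalar hy2_norm hPaP_nonneg
      _ = P * a * P := one_smul ℝ _
  have hPaP_le : P * a * P ≤ ‖a‖ • P := by
    have h := CStarAlgebra.star_left_conjugate_le_norm_smul (a := P) (b := a) ha.isSelfAdjoint
    rwa [hP_sa, hP_idem] at h
  have hP_nonneg : 0 ≤ P := by
    have h : star P * P = P := by rw [hP_sa, hP_idem]
    exact h ▸ star_mul_self_nonneg P
  have hτ3 : τ (x * star x) ≤ τ (‖a‖ • P) :=
    hmono _ _ (mul_star_self_nonneg x) (le_trans hxsx_le hPaP_le)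
  have hτP : τ (‖a‖ • P) = 0 := by
    rw [hsmulR P hP_nonneg ‖a‖ (norm_nonneg a), hproj0 P (hproj kΛ).1 (hproj kΛ).2, mul_zero]
  have hall : τ ((2⁻¹:ℝ) • f) = 0 :=
    le_antisymm (le_trans hτ1 (le_trans (le_of_eq hτ2) (le_trans hτ3 (le_of_eq hτP))))
      zero_le
  rw [hsmulR f hf_nonneg 2⁻¹ (by norm_num)] at hall
  rcases mul_eq_zero.mp hall with h | h
  · exact absurd h (by simp [ENNReal.ofReal_eq_zero])
  · exact h
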